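/- For every real u with 0 < u < 1 and every real α with 0 < α ≤ 1/2, one has u^α ≥ u · ln((1+u)/(2u)) / ln(2/(1+u)). (Note that ln(2/(1+u)) > 0 for 0 < u < 1.) -/

import Mathlib

noncomputable def phiF : ℝ → ℝ :=
  fun s => Real.log 2 + 2 * Real.log s - Real.log (1 + s ^ 2) + 2 - (2 * s + 2 * s ^ 2) / (1 + s ^ 2)

noncomputable def gF : ℝ → ℝ :=
  fun s => (1 + s) * (Real.log 2 - Real.log (1 + s ^ 2)) + 2 * s * Real.log s

lemma hasDerivAt_phiF {x : ℝ} (hx : 0 < x) :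
    HasDerivAt phiF (2 * (x - 1) ^ 2 * (x + 1) / (x * (1 + x ^ 2) ^ 2)) x := by
  have hden : (1 : ℝ) + x ^ 2 ≠ 0 := by positivity
  have h2 : HasDerivAt (fun s : ℝ => 1 + s ^ 2) (2 * x) x := by
    simpa using (hasDerivAt_pow 2 x).const_add 1
  have hlog1 : HasDerivAt (fun s : ℝ => Real.log s) x⁻¹ x := Real.hasDerivAt_log hx.ne'
  have hlog2 : HasDerivAt (fun s : ℝ => Real.log (1 + s ^ 2)) (2 * x / (1 + x ^ 2)) x := by
    simpa using h2.log hden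
  have hnum : HasDerivAt (fun s : ℝ => 2 * s + 2 * s ^ 2) (2 + 2 * (2 * x)) x := by
    simpa [Pi.add_def] using ((hasDerivAt_id x).const_mul 2).add ((hasDerivAt_pow 2 x).const_mul 2)
  have hdiv : HasDerivAt (fun s : ℝ => (2 * s + 2 * s ^ 2) / (1 + s ^ 2))
      (((2 + 2 * (2 * x)) * (1 + x ^ 2) - (2 * x + 2 * x ^ 2) * (2 * x)) / (1 + x ^ 2) ^ 2) x :=
    hnum.div h2 hden
  have H : HasDerivAt phiF
      (2 * x⁻¹ - 2 * x / (1 + x ^ 2) +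
        -(((2 + 2 * (2 * x)) * (1 + x ^ 2) - (2 * x + 2 * x ^ 2) * (2 * x)) / (1 + x ^ 2) ^ 2)) x := by
    have := ((((hlog1.const_mul 2).const_add (Real.log 2)).sub hlog2).add_const 2).sub hdiv
    exact this.congr_deriv (by ring)
  convert H using 1
  have hx' : x ≠ 0 := hx.ne'
  field_simp
  ring

lemma phiF_nonpos {s : ℝ} (hs0 : 0 < s) (hs1 : s ≤ 1) : phiF s ≤ 0 := by
  have h1 : phiF 1 = 0 := by
    simp only [phiF]
    norm_num
  rcases hs1.lt_or_eq with h | h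
  · have mono : MonotoneOn phiF (Set.Icc s 1) := by
      apply monotoneOn_of_deriv_nonneg (convex_Icc s 1)
      · intro x hx
        exact (hasDerivAt_phiF (lt_of_lt_of_le hs0 hx.1)).continuousAt.continuousWithinAt
      · rw [interior_Icc]
        intro x hx
        exact (hasDerivAt_phiF (hs0.trans hx.1)).differentiableAt.differentiableWithinAt
      · rw [interior_Icc]
        intro x hx
        rw [(hasDerivAt_phiF (hs0.trans hx.1)).deriv]
        have hx0 : 0 < x := hs0.trans hx.1
        apply div_nonneg
        · nlinarith [sq_nonneg (x - 1)]
        · positivity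
    have := mono (Set.mem_Icc.mpr ⟨le_refl s, h.le⟩) (Set.mem_Icc.mpr ⟨h.le, le_refl 1⟩) h.le
    linarith [this, h1.le]
  · rw [h, h1]

lemma hasDerivAt_gF {x : ℝ} (hx : 0 < x) : HasDerivAt gF (phiF x) x := by
  have hden : (1 : ℝ) + x ^ 2 ≠ 0 := by positivity
  have h2 : HasDerivAt (fun s : ℝ => 1 + s ^ 2) (2 * x) x := by
    simpa using (hasDerivAt_pow 2 x).const_add 1
  have hlog1 : HasDerivAt (fun s : ℝ => Real.log s) x⁻¹ x := Real.hasDerivAt_log hx.ne'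
  have hlog2' : HasDerivAt (fun s : ℝ => Real.log (1 + s ^ 2)) (2 * x / (1 + x ^ 2)) x := by
    simpa using h2.log hden
  have hlog2 : HasDerivAt (fun s : ℝ => Real.log 2 - Real.log (1 + s ^ 2))
      (-(2 * x / (1 + x ^ 2))) x := hlog2'.const_sub (Real.log 2)
  have hlin : HasDerivAt (fun s : ℝ => 1 + s) 1 x := by
    simpa using (hasDerivAt_id x).const_add 1
  have hprod : HasDerivAt (fun s : ℝ => (1 + s) * (Real.log 2 - Real.log (1 + s ^ 2)))
      (1 * (Real.log 2 - Real.log (1 + x ^ 2)) + (1 + x) * -(2 * x / (1 + x ^ 2))) x :=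
    hlin.mul hlog2
  have hxlog : HasDerivAt (fun s : ℝ => 2 * s * Real.log s)
      (2 * 1 * Real.log x + 2 * x * x⁻¹) x := by
    have h := ((hasDerivAt_id x).const_mul 2).mul hlog1
    simpa [id, Pi.mul_def] using h
  have H := hprod.add hxlog
  refine H.congr_deriv ?_
  simp only [phiF]
  have hx' : x ≠ 0 := hx.ne'
  field_simp
  ring

lemma gF_nonneg {s : ℝ} (hs0 : 0 < s) (hs1 : s ≤ 1) :
    0 ≤ (1 + s) * (Real.log 2 - Real.log (1 + s ^ 2)) + 2 * s * Real.log s := by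
  show 0 ≤ gF s
  have h1 : gF 1 = 0 := by
    simp only [gF]
    norm_num
  rcases hs1.lt_or_eq with h | h
  · have anti : AntitoneOn gF (Set.Icc s 1) := by
      apply antitoneOn_of_deriv_nonpos (convex_Icc s 1)
      · intro x hx
        exact (hasDerivAt_gF (lt_of_lt_of_le hs0 hx.1)).continuousAt.continuousWithinAt
      · rw [interior_Icc]
        intro x hx
        exact (hasDerivAt_gF (hs0.trans hx.1)).differentiableAt.differentiableWithinAt
      · rw [interior_Icc]
        intro x hx
        rw [(hasDerivAt_gF (hs0.trans hx.1)).deriv]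
        exact phiF_nonpos (hs0.trans hx.1) hx.2.le
    have := anti (Set.mem_Icc.mpr ⟨le_refl s, h.le⟩) (Set.mem_Icc.mpr ⟨h.le, le_refl 1⟩) h.le
    linarith [this, h1.ge]
  · rw [h, h1]

theorem stmt_2 (u α : ℝ) (hu₀ : 0 < u) (hu₁ : u < 1) (hα₀ : 0 < α) (hα₁ : α ≤ 1 / 2) :
    u ^ α ≥ u * Real.log ((1 + u) / (2 * u)) / Real.log (2 / (1 + u)) := by
  have hL : (0 : ℝ) < Real.log (2 / (1 + u)) := by
    apply Real.log_pos
    rw [lt_div_iff₀ (by linarith)]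
    linarith
  rw [ge_iff_le, div_le_iff₀ hL]
  have hs0 : 0 < Real.sqrt u := Real.sqrt_pos.mpr hu₀
  have hs1 : Real.sqrt u < 1 := by
    rw [show (1 : ℝ) = Real.sqrt 1 from Real.sqrt_one.symm]
    exact Real.sqrt_lt_sqrt hu₀.le hu₁
  have hsq : Real.sqrt u ^ 2 = u := Real.sq_sqrt hu₀.le
  have hg := gF_nonneg hs0 hs1.le
  have h12 : u ^ ((1 : ℝ) / 2) ≤ u ^ α := Real.rpow_le_rpow_of_exponent_ge hu₀ hu₁.le hα₁
  have h12' : u ^ ((1 : ℝ) / 2) = Real.sqrt u := (Real.sqrt_eq_rpow u).symm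
  have key : u * Real.log ((1 + u) / (2 * u)) ≤ Real.sqrt u * Real.log (2 / (1 + u)) := by
    have e1 : Real.log ((1 + u) / (2 * u)) = Real.log (1 + u) - (Real.log 2 + Real.log u) := by
      rw [Real.log_div (by linarith) (by positivity), Real.log_mul two_ne_zero hu₀.ne']
    have e2 : Real.log (2 / (1 + u)) = Real.log 2 - Real.log (1 + u) := by
      rw [Real.log_div two_ne_zero (by linarith)]
    have e3 : Real.log u = 2 * Real.log (Real.sqrt u) := by
      conv_lhs => rw [← hsq]
      rw [Real.log_pow]
      push_cast
      ring
    have e4 : Real.log (1 + u) = Real.log (1 + Real.sqrt u ^ 2) := by rw [hsq]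
    rw [e1, e2, e3, e4]
    nlinarith [mul_nonneg hs0.le hg, hsq]
  calc u * Real.log ((1 + u) / (2 * u)) ≤ Real.sqrt u * Real.log (2 / (1 + u)) := key
    _ = u ^ ((1 : ℝ) / 2) * Real.log (2 / (1 + u)) := by rw [h12']
    _ ≤ u ^ α * Real.log (2 / (1 + u)) := mul_le_mul_of_nonneg_right h12 hL.le
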